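/- Let 𝓗 be a finite-dimensional complex inner product space, let H : ℝ → (𝓗 →L[ℂ] 𝓗) be continuous with each H(t) self-adjoint, and let U : ℝ → (𝓗 →L[ℂ] 𝓗) be differentiable with U(0) = 1, U(t) unitary for every t, and i·U′(t) = H(t) ∘ U(t). For a self-adjoint operator X₀ on 𝓗, the curve X(t) := U(t)⁻¹ ∘ X₀ ∘ U(t) is the unique differentiable operator-valued curve satisfying the Heisenberg equation i·(d/dt)X(t) = X(t) ∘ H̃(t) − H̃(t) ∘ X(t) with X(0) = X₀, where H̃(t) := U(t)⁻¹ ∘ H(t) ∘ U(t). -/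

import Mathlib

open ContinuousLinearMap

theorem hasDerivAt_star_curve {𝓗 : Type*} [NormedAddCommGroup 𝓗] [InnerProductSpace ℂ 𝓗]
    [FiniteDimensional ℂ 𝓗] {U : ℝ → 𝓗 →L[ℂ] 𝓗} {U' : 𝓗 →L[ℂ] 𝓗} {t : ℝ}
    (h : HasDerivAt U U' t) :
    HasDerivAt (fun s => star (U s)) (star U') t :=
  ((starL' ℝ : (𝓗 →L[ℂ] 𝓗) ≃L[ℝ] (𝓗 →L[ℂ] 𝓗)).toContinuousLinearMap.hasFDerivAt).comp_hasDerivAt t h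

set_option maxHeartbeats 1000000 in
open ContinuousLinearMap in
theorem heisenberg_equation_unique
    {𝓗 : Type*} [NormedAddCommGroup 𝓗] [InnerProductSpace ℂ 𝓗] [FiniteDimensional ℂ 𝓗]
    (Ham : ℝ → 𝓗 →L[ℂ] 𝓗) (hHcont : Continuous Ham)
    (hHsa : ∀ t, IsSelfAdjoint (Ham t))
    (U U' : ℝ → 𝓗 →L[ℂ] 𝓗)
    (hU0 : U 0 = 1)
    (hUuni : ∀ t, adjoint (U t) ∘L U t = 1 ∧ U t ∘L adjoint (U t) = 1)
    (hUderiv : ∀ t, HasDerivAt U (U' t) t)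
    (hSch : ∀ t, Complex.I • U' t = Ham t ∘L U t)
    (X₀ : 𝓗 →L[ℂ] 𝓗) (hX₀ : IsSelfAdjoint X₀)
    (X : ℝ → 𝓗 →L[ℂ] 𝓗) (hX : ∀ t, X t = adjoint (U t) ∘L X₀ ∘L U t)
    (Htilde : ℝ → 𝓗 →L[ℂ] 𝓗) (hHt : ∀ t, Htilde t = adjoint (U t) ∘L Ham t ∘L U t) :
    (X 0 = X₀ ∧ ∀ t, ∃ D : 𝓗 →L[ℂ] 𝓗, HasDerivAt X D t ∧
        Complex.I • D = X t ∘L Htilde t - Htilde t ∘L X t) ∧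
    (∀ Y Y' : ℝ → 𝓗 →L[ℂ] 𝓗, Y 0 = X₀ →
      (∀ t, HasDerivAt Y (Y' t) t) →
      (∀ t, Complex.I • Y' t = Y t ∘L Htilde t - Htilde t ∘L Y t) →
      ∀ t, Y t = X t) := by
  have hadj : ∀ B : 𝓗 →L[ℂ] 𝓗, adjoint B = star B := fun B => (star_eq_adjoint B).symm
  have hXm : ∀ t, X t = star (U t) * (X₀ * U t) := by
    intro t; rw [hX t, hadj]; rfl
  have hHtm : ∀ t, Htilde t = star (U t) * (Ham t * U t) := by
    intro t; rw [hHt t, hadj]; rfl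
  have hAV : ∀ t, star (U t) * U t = 1 := by
    intro t; rw [← hadj]; exact (hUuni t).1
  have hVA : ∀ t, U t * star (U t) = 1 := by
    intro t; rw [← hadj]; exact (hUuni t).2
  have hSm : ∀ t, Complex.I • U' t = Ham t * U t := fun t => hSch t
  have hAderiv : ∀ t, HasDerivAt (fun s => star (U s)) (star (U' t)) t :=
    fun t => hasDerivAt_star_curve (hUderiv t)
  have hSadj : ∀ t, star (U' t) = Complex.I • (star (U t) * Ham t) := by
    intro t
    have h1 : star (Complex.I • U' t) = star (Ham t * U t) := by rw [hSm t]
    rw [star_smul, star_mul, (hHsa t).star_eq, Complex.star_def, Complex.conj_I, neg_smul] at h1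
    have h2 := congrArg (fun B => Complex.I • B) h1
    simp only [smul_neg, smul_smul, Complex.I_mul_I, neg_one_smul, neg_neg, one_smul] at h2
    exact h2
  have hU'eq : ∀ t, U' t = (-Complex.I) • (Ham t * U t) := by
    intro t
    have h := congrArg (fun B => (-Complex.I) • B) (hSm t)
    simpa [smul_smul] using h
  constructor
  · constructor
    · rw [hXm 0, hU0, star_one, one_mul, mul_one]
    · intro t
      have hc1 : ∀ B : 𝓗 →L[ℂ] 𝓗, U t * (star (U t) * B) = B := by
        intro B; rw [← mul_assoc, hVA, one_mul]
      have hc2 : ∀ B : 𝓗 →L[ℂ] 𝓗, star (U t) * (U t * B) = B := by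
        intro B; rw [← mul_assoc, hAV, one_mul]
      refine ⟨star (U' t) * (X₀ * U t) + star (U t) * (X₀ * U' t), ?_, ?_⟩
      · have h1 : HasDerivAt (fun s => X₀ * U s) (X₀ * U' t) t := by
          simpa [Pi.mul_def] using (hasDerivAt_const t X₀).mul (hUderiv t)
        have h2 := (hAderiv t).mul h1
        have hXfun : X = fun s => star (U s) * (X₀ * U s) := funext hXm
        rw [hXfun]; exact h2
      · have hgoal : X t ∘L Htilde t - Htilde t ∘L X t = X t * Htilde t - Htilde t * X t := rfl
        rw [hgoal, hXm t, hHtm t, hSadj t, hU'eq t]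
        simp only [smul_mul_assoc, mul_smul_comm, smul_smul, smul_add, mul_assoc,
          Complex.I_mul_I, mul_neg, neg_neg, one_smul, neg_one_smul, neg_mul, mul_neg,
          smul_neg, neg_smul, hc1, hc2, hVA, hAV, mul_one]
        abel
  · intro Y Y' hY0 hYderiv hYode t
    have hY'eq : ∀ s, Y' s = (-Complex.I) • (Y s * Htilde s - Htilde s * Y s) := by
      intro s
      have h0 : Complex.I • Y' s = Y s * Htilde s - Htilde s * Y s := hYode s
      have h := congrArg (fun B => (-Complex.I) • B) h0
      simpa [smul_smul] using h
    set W : ℝ → 𝓗 →L[ℂ] 𝓗 := fun s => U s * (Y s * star (U s)) with hW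
    have hWderiv : ∀ s, HasDerivAt W 0 s := by
      intro s
      have hc1 : ∀ B : 𝓗 →L[ℂ] 𝓗, U s * (star (U s) * B) = B := by
        intro B; rw [← mul_assoc, hVA, one_mul]
      have hc2 : ∀ B : 𝓗 →L[ℂ] 𝓗, star (U s) * (U s * B) = B := by
        intro B; rw [← mul_assoc, hAV, one_mul]
      have h1 : HasDerivAt (fun r => Y r * star (U r))
          (Y' s * star (U s) + Y s * star (U' s)) s :=
        (hYderiv s).mul (hAderiv s)
      have h2 := (hUderiv s).mul h1
      have hzero : U' s * (Y s * star (U s)) +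
          U s * (Y' s * star (U s) + Y s * star (U' s)) = 0 := by
        rw [hY'eq s, hSadj s, hU'eq s, hHtm s]
        simp only [smul_mul_assoc, mul_smul_comm, smul_add, smul_sub, sub_mul, mul_sub,
          mul_add, add_mul, mul_assoc, neg_smul, neg_mul, mul_neg, smul_neg,
          hc1, hc2, hVA, hAV, mul_one]
        abel
      rw [hzero] at h2
      exact h2
    have hWdiff : Differentiable ℝ W := fun s => (hWderiv s).differentiableAt
    have hWconst : ∀ s, W s = W 0 :=
      fun s => is_const_of_deriv_eq_zero hWdiff (fun x => (hWderiv x).deriv) s 0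
    have hW0 : W 0 = X₀ := by
      show U 0 * (Y 0 * star (U 0)) = X₀
      rw [hU0, hY0, star_one, mul_one, one_mul]
    have hWt : W t = X₀ := (hWconst t).trans hW0
    have hc2 : ∀ B : 𝓗 →L[ℂ] 𝓗, star (U t) * (U t * B) = B := by
      intro B; rw [← mul_assoc, hAV, one_mul]
    have hkey : star (U t) * (W t * U t) = Y t := by
      show star (U t) * (U t * (Y t * star (U t)) * U t) = Y t
      rw [mul_assoc (U t) (Y t * star (U t)) (U t), hc2, mul_assoc, hAV, mul_one]
    rw [← hkey, hWt, hXm t]
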